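/- Let $G_0$ be a finite abelian group of order $e$, and let $A \subseteq \mathbb{Z} \times G_0$ be a finite set whose projection to $\mathbb{Z}$ has all consecutive gaps bounded by $b$. Let $\pi : \mathbb{Z} \times G_0 \to \mathbb{Z}$ be the projection, $B_0 = \{\min \pi(A), \max \pi(A)\}$, and $A_0 = A \cap \pi^{-1}(B_0)$. Then $|A_0| \le 2e$, and for every $n > 2b^2 e$ the $n$-fold sumset satisfies $nA = (n - 2b^2 e) A_0 + 2b^2 e\, A$. -/

import Mathlib

open Pointwise

/-- The `n`-fold sumset of `A`. -/
def foldSum {G : Type*} [AddCommMonoid G] (n : ℕ) (A : Set G) : Set G :=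
  {t | ∃ s : Fin n → G, (∀ i, s i ∈ A) ∧ ∑ i, s i = t}

lemma foldSum_zero {G : Type*} [AddCommMonoid G] (A : Set G) : foldSum 0 A = {0} := by
  ext t
  constructor
  · rintro ⟨s, -, h⟩; simp at h; exact h.symm
  · rintro rfl; exact ⟨Fin.elim0, fun i => i.elim0, by simp⟩

lemma foldSum_one {G : Type*} [AddCommMonoid G] (A : Set G) : foldSum 1 A = A := by
  ext t
  constructor
  · rintro ⟨s, hs, rfl⟩; simpa using hs 0
  · intro ht; exact ⟨fun _ => t, fun _ => ht, by simp⟩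

lemma foldSum_add {G : Type*} [AddCommMonoid G] (p q : ℕ) (A : Set G) :
    foldSum (p + q) A = foldSum p A + foldSum q A := by
  ext t
  constructor
  · rintro ⟨s, hs, rfl⟩
    exact ⟨∑ i : Fin p, s (Fin.castAdd q i), ⟨_, fun i => hs _, rfl⟩,
      ∑ i : Fin q, s (Fin.natAdd p i), ⟨_, fun i => hs _, rfl⟩,
      (Fin.sum_univ_add s).symm⟩
  · rintro ⟨y, ⟨sy, hsy, rfl⟩, z, ⟨sz, hsz, rfl⟩, rfl⟩
    refine ⟨Fin.append sy sz, ?_, ?_⟩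
    · intro i
      rcases Nat.lt_or_ge (i : ℕ) p with h | h
      · have : i = Fin.castAdd q ⟨i, h⟩ := by ext; simp
        rw [this, Fin.append_left]; exact hsy _
      · have : i = Fin.natAdd p ⟨i - p, by omega⟩ := by ext; simp; omega
        rw [this, Fin.append_right]; exact hsz _
    · rw [Fin.sum_univ_add]
      simp [Fin.append_left, Fin.append_right]

lemma foldSum_mono {G : Type*} [AddCommMonoid G] (n : ℕ) {A B : Set G} (h : A ⊆ B) :
    foldSum n A ⊆ foldSum n B := by
  rintro t ⟨s, hs, rfl⟩
  exact ⟨s, fun i => h (hs i), rfl⟩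

lemma balance_nat (b : ℕ) (hb : 0 < b) (d u : ℕ → ℤ)
    (hd : ∀ t, t < b → 1 ≤ d t ∧ d t ≤ (b:ℤ))
    (hu : ∀ t, t < b*b → 1 ≤ u t ∧ u t ≤ (b:ℤ)) :
    ∃ i₁ i₂ j₁ j₂ : ℕ, i₁ < i₂ ∧ i₂ ≤ b ∧ j₁ < j₂ ∧ j₂ ≤ b*b ∧
      ∑ t ∈ Finset.Ico i₁ i₂, d t = ∑ t ∈ Finset.Ico j₁ j₂, u t := by
  set D : ℕ → ℤ := fun n => ∑ t ∈ Finset.range n, d t with hD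
  set U : ℕ → ℤ := fun n => ∑ t ∈ Finset.range n, u t with hU
  have hDlb : ∀ i, i ≤ b → (i:ℤ) ≤ D i := by
    intro i hi
    calc (i:ℤ) = ∑ _t ∈ Finset.range i, 1 := by simp
    _ ≤ D i := Finset.sum_le_sum (fun t ht => (hd t (lt_of_lt_of_le (Finset.mem_range.1 ht) hi)).1)
  have hDub : ∀ i, i ≤ b → D i ≤ (i:ℤ) * b := by
    intro i hi
    calc D i ≤ ∑ _t ∈ Finset.range i, (b:ℤ) :=
      Finset.sum_le_sum (fun t ht => (hd t (lt_of_lt_of_le (Finset.mem_range.1 ht) hi)).2)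
    _ = (i:ℤ) * b := by simp [mul_comm]
  have hUlb : ∀ j, j ≤ b*b → (j:ℤ) ≤ U j := by
    intro j hj
    calc (j:ℤ) = ∑ _t ∈ Finset.range j, 1 := by simp
    _ ≤ U j := Finset.sum_le_sum (fun t ht => (hu t (lt_of_lt_of_le (Finset.mem_range.1 ht) hj)).1)
  have hDmono : ∀ i₁ i₂, i₁ < i₂ → i₂ ≤ b → D i₁ < D i₂ := by
    intro i₁ i₂ h12 h2
    have : D i₂ - D i₁ = ∑ t ∈ Finset.Ico i₁ i₂, d t := (Finset.sum_Ico_eq_sub d h12.le).symm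
    have hpos : (0:ℤ) < ∑ t ∈ Finset.Ico i₁ i₂, d t := by
      have h0 : ∑ t ∈ Finset.Ico i₁ i₂, (1:ℤ) ≤ ∑ t ∈ Finset.Ico i₁ i₂, d t :=
        Finset.sum_le_sum (fun t ht => (hd t (lt_of_lt_of_le (Finset.mem_Ico.1 ht).2 h2)).1)
      simp only [Finset.sum_const, Nat.card_Ico, nsmul_eq_mul, mul_one] at h0
      have h1 : (0:ℤ) < ((i₂ - i₁ : ℕ) : ℤ) := by exact_mod_cast Nat.sub_pos_of_lt h12
      linarith
    linarith
  have hUmono : ∀ j₁ j₂, j₁ ≤ j₂ → j₂ ≤ b*b → U j₁ ≤ U j₂ := by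
    intro j₁ j₂ h12 h2
    have : U j₂ - U j₁ = ∑ t ∈ Finset.Ico j₁ j₂, u t := (Finset.sum_Ico_eq_sub u h12).symm
    have hpos : (0:ℤ) ≤ ∑ t ∈ Finset.Ico j₁ j₂, u t :=
      Finset.sum_nonneg (fun t ht => le_trans zero_le_one (hu t (lt_of_lt_of_le (Finset.mem_Ico.1 ht).2 h2)).1)
    omega
  -- the "first prefix of u exceeding D i" function
  have hex : ∀ i, i ≤ b → 1 ≤ b*b ∧ D i ≤ U (b*b) := by
    intro i hi
    refine ⟨Nat.one_le_iff_ne_zero.2 (by positivity), ?_⟩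
    calc D i ≤ (i:ℤ) * b := hDub i hi
    _ ≤ (b:ℤ)*b := by
      have : (i:ℤ) ≤ b := by exact_mod_cast hi
      nlinarith [Int.ofNat_nonneg b]
    _ ≤ U (b*b) := by
      have := hUlb (b*b) (le_refl _)
      push_cast at this ⊢
      linarith
  classical
  have hex' : ∀ i, i ≤ b → ∃ j, 1 ≤ j ∧ D i ≤ U j := fun i hi => ⟨b*b, hex i hi⟩
  set f : ℕ → ℕ := fun i => if h : i ≤ b then Nat.find (hex' i h) else 0 with hf
  have hfspec : ∀ i, i ≤ b → (1 ≤ f i ∧ D i ≤ U (f i)) := by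
    intro i hi
    simp only [hf, dif_pos hi]
    exact Nat.find_spec (hex' i hi)
  have hfmin : ∀ i (hi : i ≤ b), ∀ j, j < f i → ¬ (1 ≤ j ∧ D i ≤ U j) := by
    intro i hi j hj
    simp only [hf, dif_pos hi] at hj
    exact Nat.find_min (hex' i hi) hj
  have hfle : ∀ i, i ≤ b → f i ≤ b*b := by
    intro i hi
    simp only [hf, dif_pos hi]
    exact Nat.find_le (hex i hi)
  set r : ℕ → ℤ := fun i => U (f i) - D i with hr
  have hr0 : ∀ i, i ≤ b → 0 ≤ r i := fun i hi => sub_nonneg.2 (hfspec i hi).2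
  have hrb : ∀ i, 1 ≤ i → i ≤ b → r i < b := by
    intro i h1 hi
    rcases Nat.lt_or_ge 1 (f i) with hfi | hfi
    · -- f i ≥ 2
      have hj1 : 1 ≤ f i - 1 := by omega
      have hjlt : f i - 1 < b*b := by have := hfle i hi; omega
      have hUj : U (f i - 1) < D i := by
        by_contra hcon
        exact hfmin i hi (f i - 1) (by omega) ⟨hj1, by linarith⟩
      have hsucc : U (f i) = U (f i - 1) + u (f i - 1) := by
        have h' : f i = (f i - 1) + 1 := by omega
        calc U (f i) = U ((f i - 1) + 1) := by rw [← h']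
        _ = U (f i - 1) + u (f i - 1) := by simp only [hU]; rw [Finset.sum_range_succ]
      have := (hu (f i - 1) hjlt).2
      simp only [hr]
      linarith
    · -- f i = 1
      have hfi1 : f i = 1 := le_antisymm hfi (hfspec i hi).1
      have hU1 : U 1 = u 0 := by simp [hU]
      have hu0 := (hu 0 (by positivity)).2
      have hDi : (1:ℤ) ≤ D i := le_trans (by exact_mod_cast h1) (hDlb i hi)
      simp only [hr, hfi1]
      linarith
  by_cases hcase : ∃ i₁ ∈ Finset.Icc 1 b, ∃ i₂ ∈ Finset.Icc 1 b, i₁ < i₂ ∧ r i₁ = r i₂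
  · obtain ⟨i₁, hi₁, i₂, hi₂, h12, hreq⟩ := hcase
    simp only [Finset.mem_Icc] at hi₁ hi₂
    have hD12 : D i₁ < D i₂ := hDmono i₁ i₂ h12 hi₂.2
    have hUeq : U (f i₂) - U (f i₁) = D i₂ - D i₁ := by
      simp only [hr] at hreq; linarith
    have hff : f i₁ < f i₂ := by
      by_contra hcon
      have := hUmono (f i₂) (f i₁) (by omega) (hfle i₁ hi₁.2)
      linarith
    refine ⟨i₁, i₂, f i₁, f i₂, h12, hi₂.2, hff, hfle i₂ hi₂.2, ?_⟩
    rw [Finset.sum_Ico_eq_sub d h12.le, Finset.sum_Ico_eq_sub u hff.le]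
    show D i₂ - D i₁ = U (f i₂) - U (f i₁)
    linarith
  · push_neg at hcase
    have hinj : Set.InjOn r (Finset.Icc 1 b) := by
      intro x hx y hy hxy
      simp only [Finset.coe_Icc, Set.mem_Icc] at hx hy
      by_contra hne
      rcases Nat.lt_or_ge x y with h | h
      · exact hcase x (Finset.mem_Icc.2 hx) y (Finset.mem_Icc.2 hy) h hxy
      · exact hcase y (Finset.mem_Icc.2 hy) x (Finset.mem_Icc.2 hx) (by omega) hxy.symm
    have hsub : (Finset.Icc 1 b).image r ⊆ Finset.Ico (0:ℤ) b := by
      intro z hz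
      obtain ⟨i, hi, rfl⟩ := Finset.mem_image.1 hz
      simp only [Finset.mem_Icc] at hi
      exact Finset.mem_Ico.2 ⟨hr0 i hi.2, hrb i hi.1 hi.2⟩
    have hcard : ((Finset.Icc 1 b).image r).card = (Finset.Ico (0:ℤ) (b:ℤ)).card := by
      rw [Finset.card_image_of_injOn hinj]
      simp [Int.toNat_natCast]
    have heq : (Finset.Icc 1 b).image r = Finset.Ico (0:ℤ) b :=
      Finset.eq_of_subset_of_card_le hsub (le_of_eq hcard.symm)
    have h0mem : (0:ℤ) ∈ (Finset.Icc 1 b).image r := by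
      rw [heq]; exact Finset.mem_Ico.2 ⟨le_refl _, by exact_mod_cast hb⟩
    obtain ⟨i, hi, hri⟩ := Finset.mem_image.1 h0mem
    simp only [Finset.mem_Icc] at hi
    have hDU : D i = U (f i) := by simp only [hr] at hri; linarith
    refine ⟨0, i, 0, f i, hi.1, hi.2, (hfspec i hi.2).1, hfle i hi.2, ?_⟩
    rw [← Finset.range_eq_Ico, ← Finset.range_eq_Ico]
    exact hDU

lemma balance_finset {ι : Type*} [DecidableEq ι] (b : ℕ) (hb : 0 < b)
    (I₀ J₀ : Finset ι) (hI : I₀.card = b) (hJ : J₀.card = b*b)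
    (d u : ι → ℤ) (hd : ∀ i ∈ I₀, 1 ≤ d i ∧ d i ≤ (b:ℤ)) (hu : ∀ j ∈ J₀, 1 ≤ u j ∧ u j ≤ (b:ℤ)) :
    ∃ I J : Finset ι, I ⊆ I₀ ∧ J ⊆ J₀ ∧ I.Nonempty ∧ J.Nonempty ∧
      ∑ i ∈ I, d i = ∑ j ∈ J, u j := by
  classical
  have hI0ne : I₀.Nonempty := Finset.card_pos.1 (hI ▸ hb)
  obtain ⟨i0, hi0⟩ := hI0ne
  set eI := I₀.equivFinOfCardEq hI with heI
  set eJ := J₀.equivFinOfCardEq hJ with heJ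
  set gI : ℕ → ι := fun t => if h : t < b then ((eI.symm ⟨t, h⟩ : {x // x ∈ I₀}) : ι) else i0 with hgI
  set gJ : ℕ → ι := fun t => if h : t < b*b then ((eJ.symm ⟨t, h⟩ : {x // x ∈ J₀}) : ι) else i0 with hgJ
  have hgImem : ∀ t, t < b → gI t ∈ I₀ := by
    intro t ht; simp only [hgI, dif_pos ht]; exact (eI.symm ⟨t, ht⟩).2
  have hgJmem : ∀ t, t < b*b → gJ t ∈ J₀ := by
    intro t ht; simp only [hgJ, dif_pos ht]; exact (eJ.symm ⟨t, ht⟩).2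
  have hgIinj : ∀ t₁ t₂, t₁ < b → t₂ < b → gI t₁ = gI t₂ → t₁ = t₂ := by
    intro t₁ t₂ h1 h2 heq
    simp only [hgI, dif_pos h1, dif_pos h2] at heq
    have := eI.symm.injective (Subtype.ext heq)
    exact Fin.mk.injEq _ _ _ _ ▸ (by injection this)
  have hgJinj : ∀ t₁ t₂, t₁ < b*b → t₂ < b*b → gJ t₁ = gJ t₂ → t₁ = t₂ := by
    intro t₁ t₂ h1 h2 heq
    simp only [hgJ, dif_pos h1, dif_pos h2] at heq
    have := eJ.symm.injective (Subtype.ext heq)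
    exact Fin.mk.injEq _ _ _ _ ▸ (by injection this)
  obtain ⟨i₁, i₂, j₁, j₂, h12, hi2b, hj12, hj2b, hsum⟩ :=
    balance_nat b hb (fun t => d (gI t)) (fun t => u (gJ t))
      (fun t ht => hd _ (hgImem t ht)) (fun t ht => hu _ (hgJmem t ht))
  refine ⟨(Finset.Ico i₁ i₂).image gI, (Finset.Ico j₁ j₂).image gJ, ?_, ?_, ?_, ?_, ?_⟩
  · intro x hx
    obtain ⟨t, ht, rfl⟩ := Finset.mem_image.1 hx
    exact hgImem t (lt_of_lt_of_le (Finset.mem_Ico.1 ht).2 hi2b)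
  · intro x hx
    obtain ⟨t, ht, rfl⟩ := Finset.mem_image.1 hx
    exact hgJmem t (lt_of_lt_of_le (Finset.mem_Ico.1 ht).2 hj2b)
  · exact (Finset.nonempty_Ico.2 h12).image _
  · exact (Finset.nonempty_Ico.2 hj12).image _
  · rw [Finset.sum_image, Finset.sum_image]
    · exact hsum
    · intro t₁ ht₁ t₂ ht₂ heq
      exact hgJinj t₁ t₂ (lt_of_lt_of_le (Finset.mem_Ico.1 ht₁).2 hj2b)
        (lt_of_lt_of_le (Finset.mem_Ico.1 ht₂).2 hj2b) heq
    · intro t₁ ht₁ t₂ ht₂ heq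
      exact hgIinj t₁ t₂ (lt_of_lt_of_le (Finset.mem_Ico.1 ht₁).2 hi2b)
        (lt_of_lt_of_le (Finset.mem_Ico.1 ht₂).2 hi2b) heq

lemma exists_pools {ι : Type*} [DecidableEq ι] (f : ι → ℤ) :
    ∀ (p : ℕ) (s : Finset ι) (q : ℕ), p + q ≤ s.card →
    ∃ D U : Finset ι, D ⊆ s ∧ U ⊆ s ∧ Disjoint D U ∧ D.card = p ∧ U.card = q ∧
      ∀ i ∈ D, ∀ j ∈ U, f i ≤ f j := by
  intro p
  induction p with
  | zero =>
    intro s q hq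
    obtain ⟨U, hUs, hUcard⟩ := Finset.exists_subset_card_eq (by omega : q ≤ s.card)
    exact ⟨∅, U, Finset.empty_subset _, hUs, Finset.disjoint_empty_left _, rfl, hUcard,
      fun i hi => absurd hi (Finset.notMem_empty i)⟩
  | succ p ih =>
    intro s q hq
    have hsne : s.Nonempty := Finset.card_pos.1 (by omega)
    obtain ⟨i, his, hmin⟩ := Finset.exists_min_image s f hsne
    have hcard : p + q ≤ (s.erase i).card := by
      rw [Finset.card_erase_of_mem his]; omega
    obtain ⟨D', U', hD's, hU's, hdisj, hDcard, hUcard, hsep⟩ := ih (s.erase i) q hcard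
    refine ⟨insert i D', U', ?_, fun x hx => (Finset.erase_subset _ _) (hU's hx), ?_, ?_, hUcard, ?_⟩
    · intro x hx
      rcases Finset.mem_insert.1 hx with rfl | hx
      · exact his
      · exact (Finset.erase_subset _ _) (hD's hx)
    · rw [Finset.disjoint_insert_left]
      exact ⟨fun hiU => (Finset.mem_erase.1 (hU's hiU)).1 rfl, hdisj⟩
    · rw [Finset.card_insert_of_notMem (fun hiD => (Finset.mem_erase.1 (hD's hiD)).1 rfl), hDcard]
    · intro x hx j hj
      rcases Finset.mem_insert.1 hx with rfl | hx
      · exact hmin j ((Finset.erase_subset _ _) (hU's hj))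
      · exact hsep x hx j hj

lemma exists_partition {ι : Type*} [DecidableEq ι] :
    ∀ (e : ℕ) (m : ℕ) (s : Finset ι), s.card = e * m →
    ∃ g : ℕ → Finset ι, (∀ j, j < e → g j ⊆ s) ∧ (∀ j, j < e → (g j).card = m) ∧
      (∀ j₁ j₂, j₁ < e → j₂ < e → j₁ ≠ j₂ → Disjoint (g j₁) (g j₂)) := by
  intro e
  induction e with
  | zero => intro m s _; exact ⟨fun _ => ∅, by omega, by omega, by omega⟩
  | succ e ih =>
    intro m s hs
    have hm : m ≤ s.card := by rw [hs]; nlinarith [Nat.succ_mul e m]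
    obtain ⟨t, hts, htm⟩ := Finset.exists_subset_card_eq hm
    have hcard : (s \ t).card = e * m := by
      rw [Finset.card_sdiff_of_subset hts, hs, htm]; rw [Nat.succ_mul]; omega
    obtain ⟨g', hg's, hg'card, hg'disj⟩ := ih m (s \ t) hcard
    refine ⟨fun j => if j < e then g' j else t, ?_, ?_, ?_⟩
    · intro j hj
      by_cases h : j < e
      · simp only [if_pos h]; exact fun x hx => (Finset.mem_sdiff.1 (hg's j h hx)).1
      · simp only [if_neg h]; exact hts
    · intro j hj
      by_cases h : j < e
      · simp only [if_pos h]; exact hg'card j h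
      · simp only [if_neg h]; exact htm
    · intro j₁ j₂ h1 h2 hne
      by_cases hb1 : j₁ < e <;> by_cases hb2 : j₂ < e
      · simp only [if_pos hb1, if_pos hb2]; exact hg'disj j₁ j₂ hb1 hb2 hne
      · simp only [if_pos hb1, if_neg hb2]
        exact Finset.disjoint_left.2 (fun x hx hxt => (Finset.mem_sdiff.1 (hg's j₁ hb1 hx)).2 hxt)
      · simp only [if_neg hb1, if_pos hb2]
        exact Finset.disjoint_left.2 (fun x hxt hx => (Finset.mem_sdiff.1 (hg's j₂ hb2 hx)).2 hxt)
      · omega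

set_option maxHeartbeats 1000000 in
lemma round_lemma {G₀ : Type*} [AddCommGroup G₀] [Fintype G₀]
    (A : Finset (ℤ × G₀)) (m₀ M₀ : ℤ) (b e N : ℕ)
    (he : e = Fintype.card G₀)
    (hdown : ∀ a ∈ A, a.1 ≠ m₀ → ∃ a' ∈ A, a'.1 < a.1 ∧ a.1 ≤ a'.1 + b)
    (hup : ∀ a ∈ A, a.1 ≠ M₀ → ∃ a' ∈ A, a.1 < a'.1 ∧ a'.1 ≤ a.1 + b)
    (hb : 0 < b)
    (hN : e*b + e*(b*b) ≤ N)
    (c : Fin N → ℤ × G₀) (hc : ∀ i, c i ∈ A)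
    (hmid : ∀ i, (c i).1 ≠ m₀ ∧ (c i).1 ≠ M₀) :
    ∃ c' : Fin N → ℤ × G₀, (∀ i, c' i ∈ A) ∧ (∑ i, c' i) = ∑ i, c i ∧
      (∑ i, ((c' i).1 - m₀) * (M₀ - (c' i).1)) < ∑ i, ((c i).1 - m₀) * (M₀ - (c i).1) := by
  classical
  choose α hαA hα1 hα2 using fun i => hdown (c i) (hc i) (hmid i).1
  choose β hβA hβ1 hβ2 using fun i => hup (c i) (hc i) (hmid i).2
  set d : Fin N → ℤ := fun i => (c i).1 - (α i).1 with hd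
  set u : Fin N → ℤ := fun i => (β i).1 - (c i).1 with hu
  have hdbd : ∀ i, 1 ≤ d i ∧ d i ≤ (b:ℤ) := by
    intro i; constructor
    · have := hα1 i; simp only [hd]; omega
    · have := hα2 i; simp only [hd]; omega
  have hubd : ∀ i, 1 ≤ u i ∧ u i ≤ (b:ℤ) := by
    intro i; constructor
    · have := hβ1 i; simp only [hu]; omega
    · have := hβ2 i; simp only [hu]; omega
  -- pools
  obtain ⟨D, U, -, -, hDU, hDcard, hUcard, hsep⟩ :=
    exists_pools (fun i => (c i).1) (e*b) (Finset.univ : Finset (Fin N)) (e*(b*b))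
      (by simpa using hN)
  -- partitions
  obtain ⟨gD, hgDsub, hgDcard, hgDdisj⟩ := exists_partition e b D hDcard
  obtain ⟨gU, hgUsub, hgUcard, hgUdisj⟩ := exists_partition e (b*b) U hUcard
  -- balanced blocks
  have hbal : ∀ j : ℕ, ∃ IJ : Finset (Fin N) × Finset (Fin N),
      IJ.1 ⊆ gD j ∧ IJ.2 ⊆ gU j ∧ (j < e → (IJ.1.Nonempty ∧ IJ.2.Nonempty)) ∧
      ∑ i ∈ IJ.1, d i = ∑ i ∈ IJ.2, u i := by
    intro j
    by_cases hj : j < e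
    · obtain ⟨I, J, hIsub, hJsub, hIne, hJne, hsum⟩ :=
        balance_finset b hb (gD j) (gU j) (hgDcard j hj) (hgUcard j hj) d u
          (fun i _ => hdbd i) (fun i _ => hubd i)
      exact ⟨(I, J), hIsub, hJsub, fun _ => ⟨hIne, hJne⟩, hsum⟩
    · exact ⟨(∅, ∅), Finset.empty_subset _, Finset.empty_subset _, fun h => absurd h hj, by simp⟩
  choose IJ hIsub hJsub hIJne hIJsum using hbal
  set I : ℕ → Finset (Fin N) := fun j => (IJ j).1 with hI
  set J : ℕ → Finset (Fin N) := fun j => (IJ j).2 with hJ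
  -- Davenport
  set γ : ℕ → G₀ := fun j =>
    (∑ i ∈ I j, ((α i).2 - (c i).2)) + ∑ i ∈ J j, ((β i).2 - (c i).2) with hγ
  have hpig : ∃ s₁ s₂ : Fin (e+1), s₁ < s₂ ∧
      (∑ j ∈ Finset.range s₁, γ j) = ∑ j ∈ Finset.range s₂, γ j := by
    have hcardlt : Fintype.card G₀ < Fintype.card (Fin (e+1)) := by simp [← he]
    obtain ⟨t₁, t₂, hne, hσ⟩ :=
      Fintype.exists_ne_map_eq_of_card_lt (fun t : Fin (e+1) => ∑ j ∈ Finset.range t, γ j) hcardlt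
    rcases lt_trichotomy t₁ t₂ with h | h | h
    · exact ⟨t₁, t₂, h, hσ⟩
    · exact absurd h hne
    · exact ⟨t₂, t₁, h, hσ.symm⟩
  obtain ⟨t₁, t₂, ht12, hσeq⟩ := hpig
  set R : Finset ℕ := Finset.Ico (t₁:ℕ) (t₂:ℕ) with hR
  have hRlt : ∀ j ∈ R, j < e := by
    intro j hj
    have := (Finset.mem_Ico.1 hj).2
    have := t₂.isLt
    omega
  have hγ0 : ∑ j ∈ R, γ j = 0 := by
    rw [hR, Finset.sum_Ico_eq_sub γ (by exact_mod_cast ht12.le)]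
    rw [hσeq]; abel
  -- the unions of the selected blocks
  set IStar : Finset (Fin N) := R.biUnion I with hIStar
  set JStar : Finset (Fin N) := R.biUnion J with hJStar
  have hIdisj : (↑R : Set ℕ).PairwiseDisjoint I := by
    intro j₁ hj₁ j₂ hj₂ hne
    exact Finset.disjoint_of_subset_left (hIsub j₁) (Finset.disjoint_of_subset_right (hIsub j₂)
      (hgDdisj j₁ j₂ (hRlt j₁ hj₁) (hRlt j₂ hj₂) hne))
  have hJdisj : (↑R : Set ℕ).PairwiseDisjoint J := by
    intro j₁ hj₁ j₂ hj₂ hne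
    exact Finset.disjoint_of_subset_left (hJsub j₁) (Finset.disjoint_of_subset_right (hJsub j₂)
      (hgUdisj j₁ j₂ (hRlt j₁ hj₁) (hRlt j₂ hj₂) hne))
  have hIStarD : IStar ⊆ D := by
    intro x hx
    obtain ⟨j, hjR, hxj⟩ := Finset.mem_biUnion.1 hx
    exact hgDsub j (hRlt j hjR) (hIsub j hxj)
  have hJStarU : JStar ⊆ U := by
    intro x hx
    obtain ⟨j, hjR, hxj⟩ := Finset.mem_biUnion.1 hx
    exact hgUsub j (hRlt j hjR) (hJsub j hxj)
  have hStarDisj : Disjoint IStar JStar :=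
    Finset.disjoint_of_subset_left hIStarD (Finset.disjoint_of_subset_right hJStarU hDU)
  have hIStarne : IStar.Nonempty := by
    have ht₁R : (t₁:ℕ) ∈ R := Finset.mem_Ico.2 ⟨le_refl _, by exact_mod_cast ht12⟩
    obtain ⟨x, hx⟩ := (hIJne (t₁:ℕ) (hRlt _ ht₁R)).1
    exact ⟨x, Finset.mem_biUnion.2 ⟨(t₁:ℕ), ht₁R, hx⟩⟩
  -- balanced total displacement
  have hbalTot : ∑ i ∈ IStar, d i = ∑ i ∈ JStar, u i := by
    rw [hIStar, hJStar, Finset.sum_biUnion hIdisj, Finset.sum_biUnion hJdisj]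
    exact Finset.sum_congr rfl (fun j _ => hIJsum j)
  have hγTot : (∑ i ∈ IStar, ((α i).2 - (c i).2)) + (∑ i ∈ JStar, ((β i).2 - (c i).2)) = 0 := by
    rw [hIStar, hJStar, Finset.sum_biUnion hIdisj, Finset.sum_biUnion hJdisj,
      ← Finset.sum_add_distrib]
    exact hγ0
  -- define the new configuration
  set c' : Fin N → ℤ × G₀ := fun i => if i ∈ IStar then α i else if i ∈ JStar then β i else c i
    with hc'
  have hc'I : ∀ i ∈ IStar, c' i = α i := by intro i hi; simp only [hc', if_pos hi]
  have hc'J : ∀ i ∈ JStar, c' i = β i := by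
    intro i hi
    have : i ∉ IStar := Finset.disjoint_right.1 hStarDisj hi
    simp only [hc', if_neg this, if_pos hi]
  have hc'other : ∀ i, i ∉ IStar → i ∉ JStar → c' i = c i := by
    intro i h1 h2; simp only [hc', if_neg h1, if_neg h2]
  refine ⟨c', ?_, ?_, ?_⟩
  · intro i
    by_cases h1 : i ∈ IStar
    · rw [hc'I i h1]; exact hαA i
    by_cases h2 : i ∈ JStar
    · rw [hc'J i h2]; exact hβA i
    · rw [hc'other i h1 h2]; exact hc i
  · -- sum preserved
    have hdiff : ∑ i ∈ IStar ∪ JStar, (c' i - c i) = ∑ i, (c' i - c i) :=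
      Finset.sum_subset (Finset.subset_univ _) (fun x _ hnx => by
        rw [hc'other x (fun h => hnx (Finset.mem_union_left _ h))
          (fun h => hnx (Finset.mem_union_right _ h)), sub_self])
    have hsplit : ∑ i ∈ IStar ∪ JStar, (c' i - c i) =
        (∑ i ∈ IStar, (α i - c i)) + ∑ i ∈ JStar, (β i - c i) := by
      rw [Finset.sum_union hStarDisj]
      congr 1
      · exact Finset.sum_congr rfl (fun i hi => by rw [hc'I i hi])
      · exact Finset.sum_congr rfl (fun i hi => by rw [hc'J i hi])
    have hzero : (∑ i ∈ IStar, (α i - c i)) + (∑ i ∈ JStar, (β i - c i)) = (0 : ℤ × G₀) := by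
      rw [Prod.ext_iff]
      constructor
      · simp only [Prod.fst_add, Prod.fst_sum, Prod.fst_sub, Prod.fst_zero]
        have e1 : ∀ i ∈ IStar, (α i).1 - (c i).1 = -(d i) := fun i _ => by simp only [hd]; ring
        have e2 : ∀ i ∈ JStar, (β i).1 - (c i).1 = u i := fun i _ => by simp only [hu]
        rw [Finset.sum_congr rfl e1, Finset.sum_congr rfl e2, Finset.sum_neg_distrib]
        rw [hbalTot]; ring
      · simp only [Prod.snd_add, Prod.snd_sum, Prod.snd_sub, Prod.snd_zero]
        exact hγTot
    have htot : ∑ i, (c' i - c i) = (0 : ℤ × G₀) := by rw [← hdiff, hsplit, hzero]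
    rw [Finset.sum_sub_distrib] at htot
    exact sub_eq_zero.1 htot
  · -- potential strictly decreases
    set φ : ℤ → ℤ := fun x => (x - m₀) * (M₀ - x) with hφ
    have hdiff : ∑ i ∈ IStar ∪ JStar, (φ (c' i).1 - φ (c i).1) =
        ∑ i, (φ (c' i).1 - φ (c i).1) :=
      Finset.sum_subset (Finset.subset_univ _) (fun x _ hnx => by
        rw [hc'other x (fun h => hnx (Finset.mem_union_left _ h))
          (fun h => hnx (Finset.mem_union_right _ h)), sub_self])
    have hsplit : ∑ i ∈ IStar ∪ JStar, (φ (c' i).1 - φ (c i).1) =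
        (∑ i ∈ IStar, (φ (α i).1 - φ (c i).1)) + ∑ i ∈ JStar, (φ (β i).1 - φ (c i).1) := by
      rw [Finset.sum_union hStarDisj]
      congr 1
      · exact Finset.sum_congr rfl (fun i hi => by rw [hc'I i hi])
      · exact Finset.sum_congr rfl (fun i hi => by rw [hc'J i hi])
    -- per-term expansions
    have e1 : ∀ i ∈ IStar, φ (α i).1 - φ (c i).1 =
        -(d i)*(m₀+M₀) + 2*((c i).1*(d i)) - (d i)*(d i) := by
      intro i _
      have hdi : (α i).1 = (c i).1 - d i := by simp only [hd]; ring
      rw [hdi]; simp only [hφ]; ring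
    have e2 : ∀ i ∈ JStar, φ (β i).1 - φ (c i).1 =
        (u i)*(m₀+M₀) - 2*((c i).1*(u i)) - (u i)*(u i) := by
      intro i _
      have hui : (β i).1 = (c i).1 + u i := by simp only [hu]; ring
      rw [hui]; simp only [hφ]; ring
    obtain ⟨i₀, hi₀, hXmax⟩ := Finset.exists_max_image IStar (fun i => (c i).1) hIStarne
    set X : ℤ := (c i₀).1 with hX
    have hIbd : ∑ i ∈ IStar, ((c i).1*(d i)) ≤ X * ∑ i ∈ IStar, d i := by
      rw [Finset.mul_sum]
      exact Finset.sum_le_sum (fun i hi =>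
        mul_le_mul_of_nonneg_right (hXmax i hi) (le_trans zero_le_one (hdbd i).1))
    have hJbd : X * ∑ i ∈ JStar, u i ≤ ∑ i ∈ JStar, ((c i).1*(u i)) := by
      rw [Finset.mul_sum]
      refine Finset.sum_le_sum (fun i hi => ?_)
      have hXle : X ≤ (c i).1 := hsep i₀ (hIStarD hi₀) i (hJStarU hi)
      exact mul_le_mul_of_nonneg_right hXle (le_trans zero_le_one (hubd i).1)
    have hd2 : (1:ℤ) ≤ ∑ i ∈ IStar, (d i)*(d i) := by
      calc (1:ℤ) ≤ ∑ i ∈ IStar, 1 := by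
            simpa using (Nat.one_le_iff_ne_zero.2 (Finset.card_ne_zero_of_mem hi₀) : 1 ≤ IStar.card)
      _ ≤ ∑ i ∈ IStar, (d i)*(d i) := Finset.sum_le_sum (fun i _ => by
            have h := (hdbd i).1
            calc (1:ℤ) = 1*1 := by ring
            _ ≤ (d i)*(d i) := mul_le_mul h h zero_le_one (by linarith))
    have hu2 : (0:ℤ) ≤ ∑ i ∈ JStar, (u i)*(u i) :=
      Finset.sum_nonneg (fun i _ => mul_nonneg (by linarith [(hubd i).1]) (by linarith [(hubd i).1]))
    have hA1 : ∑ i ∈ IStar, (φ (α i).1 - φ (c i).1) =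
        (∑ i ∈ IStar, (-(d i)*(m₀+M₀))) + ((∑ i ∈ IStar, 2*((c i).1*(d i)))
          - ∑ i ∈ IStar, (d i)*(d i)) := by
      rw [← Finset.sum_sub_distrib, ← Finset.sum_add_distrib]
      exact Finset.sum_congr rfl (fun i hi => by rw [e1 i hi]; ring)
    have hA2 : ∑ i ∈ JStar, (φ (β i).1 - φ (c i).1) =
        (∑ i ∈ JStar, ((u i)*(m₀+M₀))) + ((∑ i ∈ JStar, (-(2*((c i).1*(u i)))))
          - ∑ i ∈ JStar, (u i)*(u i)) := by
      rw [← Finset.sum_sub_distrib, ← Finset.sum_add_distrib]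
      exact Finset.sum_congr rfl (fun i hi => by rw [e2 i hi]; ring)
    have c1 : ∑ i ∈ IStar, (-(d i)*(m₀+M₀)) = (-(m₀+M₀)) * ∑ i ∈ IStar, d i := by
      rw [Finset.mul_sum]; exact Finset.sum_congr rfl (fun i _ => by ring)
    have c2 : ∑ i ∈ IStar, 2*((c i).1*(d i)) = 2 * ∑ i ∈ IStar, ((c i).1*(d i)) := by
      rw [Finset.mul_sum]
    have c3 : ∑ i ∈ JStar, ((u i)*(m₀+M₀)) = (m₀+M₀) * ∑ i ∈ JStar, u i := by
      rw [Finset.mul_sum]; exact Finset.sum_congr rfl (fun i _ => by ring)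
    have c4 : ∑ i ∈ JStar, (-(2*((c i).1*(u i)))) = -(2 * ∑ i ∈ JStar, ((c i).1*(u i))) := by
      rw [Finset.mul_sum, ← Finset.sum_neg_distrib]
    have hkey : ∑ i, (φ (c' i).1 - φ (c i).1) ≤ -1 := by
      rw [← hdiff, hsplit, hA1, hA2, c1, c2, c3, c4]
      rw [← hbalTot] at hJbd ⊢
      linarith [hIbd, hJbd, hd2, hu2]
    rw [Finset.sum_sub_distrib] at hkey
    linarith

lemma core_lemma {G₀ : Type*} [AddCommGroup G₀] [Fintype G₀]
    (A A₀ : Finset (ℤ × G₀)) (m₀ M₀ : ℤ) (b e : ℕ)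
    (he : e = Fintype.card G₀)
    (hbound : ∀ a ∈ A, m₀ ≤ a.1 ∧ a.1 ≤ M₀)
    (hdown : ∀ a ∈ A, a.1 ≠ m₀ → ∃ a' ∈ A, a'.1 < a.1 ∧ a.1 ≤ a'.1 + b)
    (hup : ∀ a ∈ A, a.1 ≠ M₀ → ∃ a' ∈ A, a.1 < a'.1 ∧ a'.1 ≤ a.1 + b)
    (hA₀def : ∀ a, a ∈ A₀ ↔ a ∈ A ∧ (a.1 = m₀ ∨ a.1 = M₀)) :
    ∀ (μ : ℕ) (c : Fin (2*b^2*e+1) → ℤ × G₀), (∀ i, c i ∈ A) →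
    (∑ i, ((c i).1 - m₀) * (M₀ - (c i).1)).toNat ≤ μ →
    ∃ a₀ ∈ A₀, ∃ c'' : Fin (2*b^2*e) → ℤ × G₀, (∀ i, c'' i ∈ A) ∧
      ∑ i, c i = a₀ + ∑ i, c'' i := by
  have hν0 : ∀ (N' : ℕ) (c : Fin N' → ℤ × G₀), (∀ i, c i ∈ A) →
      (0:ℤ) ≤ ∑ i, ((c i).1 - m₀) * (M₀ - (c i).1) := by
    intro N' c hc
    refine Finset.sum_nonneg (fun i _ => mul_nonneg ?_ ?_)
    · have := (hbound (c i) (hc i)).1; linarith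
    · have := (hbound (c i) (hc i)).2; linarith
  intro μ
  induction μ with
  | zero =>
    intro c hc hμ
    by_cases hex : ∃ i, c i ∈ A₀
    · obtain ⟨i, hi⟩ := hex
      exact ⟨c i, hi, c ∘ i.succAbove, fun j => hc _, Fin.sum_univ_succAbove c i⟩
    · exfalso
      push_neg at hex
      have hmid : ∀ i, (c i).1 ≠ m₀ ∧ (c i).1 ≠ M₀ := by
        intro i
        constructor <;> intro h <;> exact hex i ((hA₀def (c i)).2 ⟨hc i, by tauto⟩)
      have hb : 0 < b := by
        obtain ⟨a', -, h1, h2⟩ := hdown (c 0) (hc 0) (hmid 0).1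
        omega
      obtain ⟨c', hc', -, hlt⟩ := round_lemma A m₀ M₀ b e _ he hdown hup hb
        (by
        have hb2 : b ≤ b*b := Nat.le_mul_of_pos_left b hb
        calc e*b + e*(b*b) ≤ e*(b*b) + e*(b*b) := by gcongr
        _ = 2*b^2*e := by rw [pow_two]; ring
        _ ≤ 2*b^2*e + 1 := Nat.le_succ _) c hc hmid
      have h0 := hν0 _ c' hc'
      have h0' := hν0 _ c hc
      omega
  | succ μ ih =>
    intro c hc hμ
    by_cases hex : ∃ i, c i ∈ A₀
    · obtain ⟨i, hi⟩ := hex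
      exact ⟨c i, hi, c ∘ i.succAbove, fun j => hc _, Fin.sum_univ_succAbove c i⟩
    · push_neg at hex
      have hmid : ∀ i, (c i).1 ≠ m₀ ∧ (c i).1 ≠ M₀ := by
        intro i
        constructor <;> intro h <;> exact hex i ((hA₀def (c i)).2 ⟨hc i, by tauto⟩)
      have hb : 0 < b := by
        obtain ⟨a', -, h1, h2⟩ := hdown (c 0) (hc 0) (hmid 0).1
        omega
      obtain ⟨c', hc', hsum, hlt⟩ := round_lemma A m₀ M₀ b e _ he hdown hup hb
        (by
        have hb2 : b ≤ b*b := Nat.le_mul_of_pos_left b hb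
        calc e*b + e*(b*b) ≤ e*(b*b) + e*(b*b) := by gcongr
        _ = 2*b^2*e := by rw [pow_two]; ring
        _ ≤ 2*b^2*e + 1 := Nat.le_succ _) c hc hmid
      obtain ⟨a₀, ha₀, c'', hc'', heq⟩ := ih c' hc' (by
        have h0 := hν0 _ c' hc'
        omega)
      exact ⟨a₀, ha₀, c'', hc'', by rw [← hsum]; exact heq⟩

theorem stmt_2 (G₀ : Type*) [AddCommGroup G₀] [Fintype G₀] (e : ℕ)
    (he : e = Fintype.card G₀)
    (A : Finset (ℤ × G₀)) (hA : A.Nonempty) (b : ℕ)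
    (P : Finset ℤ) (hP : P = A.image Prod.fst)
    -- consecutive gaps of the projection are bounded by `b`
    (hgap : ∀ x ∈ P, x ≠ P.max' (hP ▸ hA.image _) →
      ∃ y ∈ P, x < y ∧ y ≤ x + (b : ℤ))
    (A₀ : Finset (ℤ × G₀))
    (hA₀ : A₀ = A.filter (fun p =>
      p.1 = P.min' (hP ▸ hA.image _) ∨ p.1 = P.max' (hP ▸ hA.image _))) :
    A₀.card ≤ 2 * e ∧
    ∀ n : ℕ, 2 * b ^ 2 * e < n →
      foldSum n (A : Set (ℤ × G₀)) =
        foldSum (n - 2 * b ^ 2 * e) (A₀ : Set (ℤ × G₀)) +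
          foldSum (2 * b ^ 2 * e) (A : Set (ℤ × G₀)) := by
  classical
  subst hP
  have hPne : (A.image Prod.fst).Nonempty := hA.image _
  set P := A.image Prod.fst with hP
  set m₀ := P.min' hPne with hm₀
  set M₀ := P.max' hPne with hM₀
  -- basic facts
  have hmemP : ∀ a ∈ A, a.1 ∈ P := fun a ha => Finset.mem_image.2 ⟨a, ha, rfl⟩
  have hPA : ∀ x ∈ P, ∃ a ∈ A, a.1 = x := by
    intro x hx
    obtain ⟨a, ha, rfl⟩ := Finset.mem_image.1 hx
    exact ⟨a, ha, rfl⟩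
  have hbound : ∀ a ∈ A, m₀ ≤ a.1 ∧ a.1 ≤ M₀ :=
    fun a ha => ⟨P.min'_le _ (hmemP a ha), P.le_max' _ (hmemP a ha)⟩
  have hup : ∀ a ∈ A, a.1 ≠ M₀ → ∃ a' ∈ A, a.1 < a'.1 ∧ a'.1 ≤ a.1 + (b:ℤ) := by
    intro a ha hne
    obtain ⟨y, hy, h1, h2⟩ := hgap a.1 (hmemP a ha) hne
    obtain ⟨a', ha', rfl⟩ := hPA y hy
    exact ⟨a', ha', h1, h2⟩
  have hdown : ∀ a ∈ A, a.1 ≠ m₀ → ∃ a' ∈ A, a'.1 < a.1 ∧ a.1 ≤ a'.1 + (b:ℤ) := by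
    intro a ha hne
    have hm₀P : m₀ ∈ P := P.min'_mem hPne
    have hm₀lt : m₀ < a.1 := lt_of_le_of_ne (P.min'_le _ (hmemP a ha)) (Ne.symm hne)
    set Q := P.filter (fun x => x < a.1) with hQ
    have hQne : Q.Nonempty := ⟨m₀, Finset.mem_filter.2 ⟨hm₀P, hm₀lt⟩⟩
    set y := Q.max' hQne with hy
    have hyQ : y ∈ Q := Q.max'_mem hQne
    have hyP : y ∈ P := (Finset.mem_filter.1 hyQ).1
    have hylt : y < a.1 := (Finset.mem_filter.1 hyQ).2
    have hyneM : y ≠ M₀ := by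
      have := P.le_max' a.1 (hmemP a ha)
      omega
    obtain ⟨y', hy', h1, h2⟩ := hgap y hyP hyneM
    have hy'ge : a.1 ≤ y' := by
      by_contra hcon
      push_neg at hcon
      have : y' ∈ Q := Finset.mem_filter.2 ⟨hy', hcon⟩
      have := Q.le_max' y' this
      omega
    obtain ⟨a', ha', ha'y⟩ := hPA y hyP
    exact ⟨a', ha', by omega, by omega⟩
  have hA₀def : ∀ a, a ∈ A₀ ↔ a ∈ A ∧ (a.1 = m₀ ∨ a.1 = M₀) := by
    intro a
    rw [hA₀, Finset.mem_filter]
  constructor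
  · -- cardinality bound
    have hsub : A₀ ⊆ A.filter (fun p => p.1 = m₀) ∪ A.filter (fun p => p.1 = M₀) := by
      intro a ha
      rw [hA₀def] at ha
      rcases ha.2 with h | h
      · exact Finset.mem_union_left _ (Finset.mem_filter.2 ⟨ha.1, h⟩)
      · exact Finset.mem_union_right _ (Finset.mem_filter.2 ⟨ha.1, h⟩)
    have hcard1 : ∀ v : ℤ, (A.filter (fun p => p.1 = v)).card ≤ e := by
      intro v
      rw [he, ← Finset.card_univ]
      refine Finset.card_le_card_of_injOn Prod.snd (fun _ _ => Finset.mem_univ _) ?_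
      intro p hp q hq hpq
      simp only [Finset.coe_filter, Set.mem_setOf_eq] at hp hq
      exact Prod.ext (hp.2.trans hq.2.symm) hpq
    calc A₀.card ≤ _ := Finset.card_le_card hsub
    _ ≤ (A.filter (fun p => p.1 = m₀)).card + (A.filter (fun p => p.1 = M₀)).card :=
      Finset.card_union_le _ _
    _ ≤ 2 * e := by have := hcard1 m₀; have := hcard1 M₀; omega
  · -- the sumset identity
    intro n hn
    set k := 2 * b ^ 2 * e with hk
    have hA₀A : (A₀ : Set (ℤ × G₀)) ⊆ (A : Set (ℤ × G₀)) := by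
      intro a ha
      simp only [Finset.coe_subset, Finset.mem_coe] at *
      exact ((hA₀def a).1 ha).1
    have hcore : foldSum (k+1) (A : Set (ℤ × G₀)) ⊆
        (A₀ : Set (ℤ × G₀)) + foldSum k (A : Set (ℤ × G₀)) := by
      rintro t ⟨s, hs, rfl⟩
      obtain ⟨a₀, ha₀, c'', hc'', heq⟩ := core_lemma A A₀ m₀ M₀ b e he hbound hdown hup hA₀def
        (∑ i, ((s i).1 - m₀) * (M₀ - (s i).1)).toNat s (fun i => hs i) le_rfl
      exact ⟨a₀, ha₀, ∑ i, c'' i, ⟨c'', fun i => hc'' i, rfl⟩, heq.symm⟩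
    have hmain : ∀ j : ℕ, foldSum (k+1+j) (A : Set (ℤ × G₀)) ⊆
        foldSum (1+j) (A₀ : Set (ℤ × G₀)) + foldSum k (A : Set (ℤ × G₀)) := by
      intro j
      induction j with
      | zero => simpa [foldSum_one] using hcore
      | succ j ih =>
        have h1 : foldSum (k+1+(j+1)) (A : Set (ℤ × G₀)) =
            foldSum (k+1) (A : Set (ℤ × G₀)) + foldSum (j+1) (A : Set (ℤ × G₀)) := by
          rw [← foldSum_add]
        have h2 : foldSum (k+1) (A : Set (ℤ × G₀)) + foldSum (j+1) (A : Set (ℤ × G₀)) ⊆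
            ((A₀ : Set (ℤ × G₀)) + foldSum k (A : Set (ℤ × G₀))) +
              foldSum (j+1) (A : Set (ℤ × G₀)) :=
          Set.add_subset_add_right hcore
        have h3 : ((A₀ : Set (ℤ × G₀)) + foldSum k (A : Set (ℤ × G₀))) +
              foldSum (j+1) (A : Set (ℤ × G₀)) =
            (A₀ : Set (ℤ × G₀)) + foldSum (k+1+j) (A : Set (ℤ × G₀)) := by
          rw [add_assoc, ← foldSum_add, show k+(j+1) = k+1+j from by omega]
        have h4 : (A₀ : Set (ℤ × G₀)) + foldSum (k+1+j) (A : Set (ℤ × G₀)) ⊆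
            (A₀ : Set (ℤ × G₀)) + (foldSum (1+j) (A₀ : Set (ℤ × G₀)) +
              foldSum k (A : Set (ℤ × G₀))) :=
          Set.add_subset_add_left ih
        have h5 : (A₀ : Set (ℤ × G₀)) + (foldSum (1+j) (A₀ : Set (ℤ × G₀)) +
              foldSum k (A : Set (ℤ × G₀))) =
            foldSum (1+(j+1)) (A₀ : Set (ℤ × G₀)) + foldSum k (A : Set (ℤ × G₀)) := by
          rw [show 1+(j+1) = 1+(1+j) from by omega,
            foldSum_add 1 (1+j) (A₀ : Set (ℤ × G₀)), foldSum_one, add_assoc]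
        intro x hx
        rw [h1] at hx
        have hx2 := h2 hx
        rw [h3] at hx2
        have hx3 := h4 hx2
        rwa [h5] at hx3
    apply Set.Subset.antisymm
    · have hmn := hmain (n-(k+1))
      rw [show k+1+(n-(k+1)) = n from by omega, show 1+(n-(k+1)) = n-k from by omega] at hmn
      exact hmn
    · intro x hx
      have hsub : foldSum (n-k) (A₀ : Set (ℤ × G₀)) + foldSum k (A : Set (ℤ × G₀)) ⊆
          foldSum (n-k) (A : Set (ℤ × G₀)) + foldSum k (A : Set (ℤ × G₀)) :=
        Set.add_subset_add_right (foldSum_mono _ hA₀A)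
      have hx2 := hsub hx
      rw [← foldSum_add, show n-k+k = n from by omega] at hx2
      exact hx2
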